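/- Let k be a field, q ∈ k nonzero, and let H = A(SL_q(2,k)) be the Hopf algebra generated as an algebra by a, b, c, d subject to ba=qab, ca=qac, db=qbd, dc=qcd, bc=cb, ad−q⁻¹bc=da−qbc=1, with Δ(a)=a⊗a+b⊗c, Δ(b)=a⊗b+b⊗d, Δ(c)=c⊗a+d⊗c, Δ(d)=c⊗b+d⊗d, ε(a)=ε(d)=1, ε(b)=ε(c)=0, S(a)=d, S(d)=a, S(b)=−qb, S(c)=−q⁻¹c. Then the assignment δ(a)=q, δ(b)=0, δ(c)=0, δ(d)=q⁻¹ extends to a well-defined character δ: H → k, and the twisted antipode Ŝ(h) = δ(h⁽²⁾)S(h⁽¹⁾) satisfies Ŝ² = id_H; i.e., (δ, 1) is a modular pair in involution for the dual theory. -/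

import Mathlib

open TensorProduct Coalgebra HopfAlgebra

section Helpers

variable {R : Type*} {A : Type*} [CommSemiring R] [Semiring A]

/-- A representation of `comul (x*y)` from representations of `comul x`, `comul y`. -/
noncomputable def Coalgebra.Repr.mul' [Bialgebra R A] {ι κ : Type*} {x y : A}
    (rx : Repr R x ι) (ry : Repr R y κ) : Repr R (x * y) (ι × κ) where
  index := rx.index ×ˢ ry.index
  left p := rx.left p.1 * ry.left p.2
  right p := rx.right p.1 * ry.right p.2
  eq := by
    rw [show CoalgebraStruct.comul (R := R) (x * y) = comul x * comul y from
      Bialgebra.comul_mul x y, ← rx.eq, ← ry.eq, Finset.sum_mul_sum]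
    rw [Finset.sum_product]
    simp [Algebra.TensorProduct.tmul_mul_tmul]

@[simp] lemma Coalgebra.Repr.mul'_index [Bialgebra R A] {ι κ : Type*} {x y : A}
    (rx : Repr R x ι) (ry : Repr R y κ) : (rx.mul' ry).index = rx.index ×ˢ ry.index := rfl

@[simp] lemma Coalgebra.Repr.mul'_left [Bialgebra R A] {ι κ : Type*} {x y : A}
    (rx : Repr R x ι) (ry : Repr R y κ) (p) : (rx.mul' ry).left p = rx.left p.1 * ry.left p.2 := rfl

@[simp] lemma Coalgebra.Repr.mul'_right [Bialgebra R A] {ι κ : Type*} {x y : A}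
    (rx : Repr R x ι) (ry : Repr R y κ) (p) : (rx.mul' ry).right p = rx.right p.1 * ry.right p.2 := rfl

lemma sum_smul_counit [Module R A] [Coalgebra R A] {ι : Type*} {a : A} (r : Repr R a ι) :
    ∑ i ∈ r.index, counit (R := R) (r.right i) • r.left i = a := by
  have h := congrArg (TensorProduct.rid R A) (sum_tmul_counit_eq r)
  rw [map_sum] at h
  simp only [TensorProduct.rid_tmul, one_smul] at h
  exact h

end Helpers

section AntiMul

variable {R : Type*} {A : Type*} [CommSemiring R] [Semiring A] [HopfAlgebra R A]

lemma antipode_one' : antipode (R := R) (A := A) 1 = 1 := by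
  have := mul_antipode_rTensor_comul_apply (R := R) (A := A) 1
  rw [Bialgebra.comul_one, Algebra.TensorProduct.one_def, LinearMap.rTensor_tmul,
    LinearMap.mul'_apply, mul_one, Bialgebra.counit_one] at this
  simpa using this

end AntiMul

section AntiMul2

variable {R : Type*} {A : Type*} [CommSemiring R] [Semiring A] [HopfAlgebra R A]

lemma collapse_left {ι κ : Type*} (c d e : A) {y : A} (ry : Repr R y ι)
    (ry1 : ∀ j, Repr R (ry.left j) κ) :
    ∑ j ∈ ry.index, ∑ n ∈ (ry1 j).index,
      antipode (R := R) (c * (ry1 j).left n) *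
        ((d * (ry1 j).right n) * (antipode (R := R) (ry.right j) * e)) =
    antipode (R := R) (c * y) * (d * e) := by
  classical
  have key := sum_map_tmul_tmul_eq (R := R)
    ((antipode (R := R)).comp (LinearMap.mulLeft R c))
    (LinearMap.mulLeft R d)
    ((LinearMap.mulRight R e).comp (antipode (R := R))) y
    (repr := ry) (a₁ := ry1) (a₂ := fun j => ℛ R (ry.right j))
  have key2 := congrArg (LinearMap.mul' R A ∘ₗ (LinearMap.mul' R A).lTensor A) key
  simp only [map_sum, LinearMap.coe_comp, Function.comp_apply, LinearMap.lTensor_tmul,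
    LinearMap.comp_apply, LinearMap.mul'_apply, TensorProduct.map_tmul,
    LinearMap.mulLeft_apply, LinearMap.mulRight_apply] at key2
  rw [← key2]
  have step : ∀ j ∈ ry.index,
      (∑ n ∈ (ℛ R (ry.right j)).index,
        antipode (R := R) (c * ry.left j) *
          ((d * (ℛ R (ry.right j)).left n) *
            (antipode (R := R) ((ℛ R (ry.right j)).right n) * e))) =
      counit (R := R) (ry.right j) • (antipode (R := R) (c * ry.left j) * (d * e)) := by
    intro j _
    have inner : (∑ n ∈ (ℛ R (ry.right j)).index,
        (ℛ R (ry.right j)).left n * (antipode (R := R) ((ℛ R (ry.right j)).right n) * e)) =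
        counit (R := R) (ry.right j) • e := by
      calc (∑ n ∈ (ℛ R (ry.right j)).index,
          (ℛ R (ry.right j)).left n * (antipode (R := R) ((ℛ R (ry.right j)).right n) * e))
          = (∑ n ∈ (ℛ R (ry.right j)).index,
          (ℛ R (ry.right j)).left n * antipode (R := R) ((ℛ R (ry.right j)).right n)) * e := by
            rw [Finset.sum_mul]; simp only [mul_assoc]
        _ = algebraMap R A (counit (R := R) (ry.right j)) * e := by
            rw [sum_mul_antipode_eq_algebraMap_counit]
        _ = counit (R := R) (ry.right j) • e := by rw [Algebra.smul_def]
    rw [← Finset.mul_sum]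
    simp only [mul_assoc]
    rw [← Finset.mul_sum]
    rw [inner, mul_smul_comm, mul_smul_comm]
  rw [Finset.sum_congr rfl step]
  calc (∑ j ∈ ry.index,
      counit (R := R) (ry.right j) • (antipode (R := R) (c * ry.left j) * (d * e)))
      = (∑ j ∈ ry.index, counit (R := R) (ry.right j) • antipode (R := R) (c * ry.left j))
          * (d * e) := by
        rw [Finset.sum_mul]; simp only [smul_mul_assoc]
    _ = antipode (R := R) (c * y) * (d * e) := by
        congr 1
        have := congrArg ((antipode (R := R)).comp (LinearMap.mulLeft R c)) (sum_smul_counit ry)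
        rw [map_sum] at this
        simpa using this

lemma collapse_right {ι κ : Type*} (w : A) {x : A} (rx : Repr R x ι)
    (rx1 : ∀ i, Repr R (rx.left i) κ) :
    ∑ i ∈ rx.index, ∑ m ∈ (rx1 i).index,
      antipode (R := R) ((rx1 i).left m * w) *
        ((rx1 i).right m * antipode (R := R) (rx.right i)) =
    antipode (R := R) (x * w) := by
  classical
  have key := sum_map_tmul_tmul_eq (R := R)
    ((antipode (R := R)).comp (LinearMap.mulRight R w))
    (LinearMap.id (R := R) (M := A))
    (antipode (R := R)) x
    (repr := rx) (a₁ := rx1) (a₂ := fun i => ℛ R (rx.right i))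
  have key2 := congrArg (LinearMap.mul' R A ∘ₗ (LinearMap.mul' R A).lTensor A) key
  simp only [map_sum, LinearMap.coe_comp, Function.comp_apply, LinearMap.lTensor_tmul,
    LinearMap.comp_apply, LinearMap.mul'_apply, TensorProduct.map_tmul,
    LinearMap.mulRight_apply, LinearMap.id_coe, id_eq] at key2
  rw [← key2]
  have step : ∀ i ∈ rx.index,
      (∑ n ∈ (ℛ R (rx.right i)).index,
        antipode (R := R) (rx.left i * w) *
          ((ℛ R (rx.right i)).left n * antipode (R := R) ((ℛ R (rx.right i)).right n))) =
      counit (R := R) (rx.right i) • antipode (R := R) (rx.left i * w) := by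
    intro i _
    rw [← Finset.mul_sum, sum_mul_antipode_eq_algebraMap_counit, Algebra.algebraMap_eq_smul_one,
      mul_smul_comm, mul_one]
  rw [Finset.sum_congr rfl step]
  have := congrArg ((antipode (R := R)).comp (LinearMap.mulRight R w)) (sum_smul_counit rx)
  rw [map_sum] at this
  simpa using this

end AntiMul2

lemma antipode_mul_antidistrib' {R : Type*} {A : Type*} [CommSemiring R] [Semiring A]
    [HopfAlgebra R A] (x y : A) :
    antipode (R := R) (x * y) = antipode (R := R) y * antipode (R := R) x := by
  classical
  set rx := ℛ R x with hrx
  set ry := ℛ R y with hry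
  set rx1 : ∀ i, Repr R (rx.left i) (A × A) := fun i => ℛ R (rx.left i) with hrx1
  set ry1 : ∀ j, Repr R (ry.left j) (A × A) := fun j => ℛ R (ry.left j) with hry1
  symm
  calc antipode (R := R) y * antipode (R := R) x
      = ∑ i ∈ rx.index, counit (R := R) (rx.left i) •
          (antipode (R := R) y * antipode (R := R) (rx.right i)) := by
        conv_lhs => rw [show x = ∑ i ∈ rx.index, counit (R := R) (rx.left i) • rx.right i from
          (sum_counit_smul rx).symm]
        rw [map_sum, Finset.mul_sum]
        simp only [map_smul, mul_smul_comm]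
    _ = ∑ i ∈ rx.index, ∑ j ∈ ry.index,
          (counit (R := R) (rx.left i) * counit (R := R) (ry.left j)) •
          (antipode (R := R) (ry.right j) * antipode (R := R) (rx.right i)) := by
        refine Finset.sum_congr rfl fun i _ => ?_
        conv_lhs => rw [show y = ∑ j ∈ ry.index, counit (R := R) (ry.left j) • ry.right j from
          (sum_counit_smul ry).symm]
        rw [map_sum, Finset.sum_mul, Finset.smul_sum]
        refine Finset.sum_congr rfl fun j _ => ?_
        rw [map_smul, smul_mul_assoc, smul_smul]
    _ = ∑ i ∈ rx.index, ∑ j ∈ ry.index,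
          counit (R := R) (rx.left i * ry.left j) •
          (antipode (R := R) (ry.right j) * antipode (R := R) (rx.right i)) := by
        simp only [Bialgebra.counit_mul]
    _ = ∑ i ∈ rx.index, ∑ j ∈ ry.index,
          (∑ p ∈ ((rx1 i).mul' (ry1 j)).index,
            antipode (R := R) (((rx1 i).mul' (ry1 j)).left p) * ((rx1 i).mul' (ry1 j)).right p) *
          (antipode (R := R) (ry.right j) * antipode (R := R) (rx.right i)) := by
        refine Finset.sum_congr rfl fun i _ => Finset.sum_congr rfl fun j _ => ?_
        rw [sum_antipode_mul_eq_smul ((rx1 i).mul' (ry1 j)), smul_mul_assoc, one_mul]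
    _ = ∑ i ∈ rx.index, ∑ m ∈ (rx1 i).index, ∑ j ∈ ry.index, ∑ n ∈ (ry1 j).index,
          antipode (R := R) ((rx1 i).left m * (ry1 j).left n) *
            ((rx1 i).right m * ((ry1 j).right n *
              (antipode (R := R) (ry.right j) * antipode (R := R) (rx.right i)))) := by
        refine Finset.sum_congr rfl fun i _ => ?_
        have exp : ∀ j ∈ ry.index,
            (∑ p ∈ ((rx1 i).mul' (ry1 j)).index,
              antipode (R := R) (((rx1 i).mul' (ry1 j)).left p) * ((rx1 i).mul' (ry1 j)).right p) *
            (antipode (R := R) (ry.right j) * antipode (R := R) (rx.right i)) =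
            ∑ m ∈ (rx1 i).index, ∑ n ∈ (ry1 j).index,
              antipode (R := R) ((rx1 i).left m * (ry1 j).left n) *
                ((rx1 i).right m * ((ry1 j).right n *
                  (antipode (R := R) (ry.right j) * antipode (R := R) (rx.right i)))) := by
          intro j _
          rw [Finset.sum_mul]
          simp only [Coalgebra.Repr.mul']
          rw [Finset.sum_product]
          simp only [mul_assoc]
        rw [Finset.sum_congr rfl exp, Finset.sum_comm]
    _ = ∑ i ∈ rx.index, ∑ m ∈ (rx1 i).index,
          antipode (R := R) ((rx1 i).left m * y) *
            ((rx1 i).right m * antipode (R := R) (rx.right i)) := by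
        refine Finset.sum_congr rfl fun i _ => Finset.sum_congr rfl fun m _ => ?_
        have := collapse_left ((rx1 i).left m) ((rx1 i).right m)
          (antipode (R := R) (rx.right i)) ry ry1
        rw [← this]
        refine Finset.sum_congr rfl fun j _ => Finset.sum_congr rfl fun n _ => ?_
        simp only [mul_assoc]
    _ = antipode (R := R) (x * y) := collapse_right y rx rx1


open TensorProduct Coalgebra

/-- Let `k` be a field and `q ∈ k` nonzero, and let `H = A(SL_q(2,k))`
be the Hopf algebra with generators `a, b, c, d`, the quantum `SL(2)` relations, and the
indicated comultiplication, counit and antipode (the universal property of the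
presentation is part of the data).  Then `δ(a) = q`, `δ(b) = 0`, `δ(c) = 0`,
`δ(d) = q⁻¹` extends to a well-defined character `δ : H → k`, and the twisted antipode
`Ŝ(h) = δ(h⁽²⁾)S(h⁽¹⁾)` satisfies `Ŝ² = id`; i.e. `(δ,1)` is a modular pair in
involution for the dual theory. -/
theorem statement9.{u} (k : Type u) [Field k] (q : k) (hq : q ≠ 0)
    (H : Type u) [Ring H] [HopfAlgebra k H]
    (ea eb ec ed : H)
    -- `H` is generated as an algebra by `a, b, c, d`
    (hgen : Algebra.adjoin k ({ea, eb, ec, ed} : Set H) = ⊤)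
    -- the defining relations
    (hba : eb * ea = q • (ea * eb)) (hca : ec * ea = q • (ea * ec))
    (hdb : ed * eb = q • (eb * ed)) (hdc : ed * ec = q • (ec * ed))
    (hbc : eb * ec = ec * eb)
    (had : ea * ed - q⁻¹ • (eb * ec) = 1) (hda : ed * ea - q • (eb * ec) = 1)
    -- `H` is the universal algebra with these generators and relations
    (hUMP : ∀ (B : Type u) [Ring B] [Algebra k B] (a' b' c' d' : B),
      b' * a' = q • (a' * b') → c' * a' = q • (a' * c') →
      d' * b' = q • (b' * d') → d' * c' = q • (c' * d') →
      b' * c' = c' * b' →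
      a' * d' - q⁻¹ • (b' * c') = 1 → d' * a' - q • (b' * c') = 1 →
      ∃ f : H →ₐ[k] B, f ea = a' ∧ f eb = b' ∧ f ec = c' ∧ f ed = d')
    -- comultiplication on the generators
    (hΔa : comul (R := k) ea = ea ⊗ₜ[k] ea + eb ⊗ₜ[k] ec)
    (hΔb : comul (R := k) eb = ea ⊗ₜ[k] eb + eb ⊗ₜ[k] ed)
    (hΔc : comul (R := k) ec = ec ⊗ₜ[k] ea + ed ⊗ₜ[k] ec)
    (hΔd : comul (R := k) ed = ec ⊗ₜ[k] eb + ed ⊗ₜ[k] ed)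
    -- counit on the generators
    (hεa : counit (R := k) ea = 1) (hεd : counit (R := k) ed = 1)
    (hεb : counit (R := k) eb = 0) (hεc : counit (R := k) ec = 0)
    -- antipode on the generators
    (hSa : HopfAlgebra.antipode (R := k) ea = ed)
    (hSd : HopfAlgebra.antipode (R := k) ed = ea)
    (hSb : HopfAlgebra.antipode (R := k) eb = -(q • eb))
    (hSc : HopfAlgebra.antipode (R := k) ec = -(q⁻¹ • ec)) :
    ∃ δ : H →ₐ[k] k, δ ea = q ∧ δ eb = 0 ∧ δ ec = 0 ∧ δ ed = q⁻¹ ∧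
      ∀ h : H,
        ((TensorProduct.rid k H).toLinearMap
            ∘ₗ TensorProduct.map (HopfAlgebra.antipode (R := k)) δ.toLinearMap
            ∘ₗ comul)
          (((TensorProduct.rid k H).toLinearMap
            ∘ₗ TensorProduct.map (HopfAlgebra.antipode (R := k)) δ.toLinearMap
            ∘ₗ comul) h) = h := by
  classical
  obtain ⟨δ, hδa, hδb, hδc, hδd⟩ := hUMP k q 0 0 q⁻¹
    (by simp) (by simp) (by simp) (by simp) (by simp)
    (by simp [smul_eq_mul, mul_inv_cancel₀ hq])
    (by simp [smul_eq_mul, inv_mul_cancel₀ hq])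
  refine ⟨δ, hδa, hδb, hδc, hδd, ?_⟩
  set T : H →ₗ[k] H :=
    (TensorProduct.rid k H).toLinearMap
      ∘ₗ TensorProduct.map (HopfAlgebra.antipode (R := k)) δ.toLinearMap
      ∘ₗ comul with hT
  -- elementwise formula for `T`
  have Trepr : ∀ (h : H) {ι : Type u} (r : Coalgebra.Repr k h ι),
      T h = ∑ i ∈ r.index, δ (r.right i) • antipode (R := k) (r.left i) := by
    intro h _ r
    rw [hT]
    simp only [LinearMap.comp_apply]
    rw [← r.eq, map_sum, map_sum]
    simp [TensorProduct.map_tmul, TensorProduct.rid_tmul]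
  -- `T` is anti-multiplicative
  have Tmul : ∀ x y : H, T (x * y) = T y * T x := by
    intro x y
    rw [Trepr (x * y) ((ℛ k x).mul' (ℛ k y)), Trepr x (ℛ k x), Trepr y (ℛ k y)]
    rw [Finset.sum_mul_sum]
    simp only [Coalgebra.Repr.mul']
    rw [Finset.sum_product]
    rw [Finset.sum_comm]
    refine Finset.sum_congr rfl fun j _ => Finset.sum_congr rfl fun i _ => ?_
    rw [map_mul, antipode_mul_antidistrib', smul_mul_smul_comm, mul_comm]
  have T1 : T (1 : H) = 1 := by
    rw [hT]
    simp only [LinearMap.comp_apply]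
    rw [Bialgebra.comul_one, Algebra.TensorProduct.one_def]
    simp [TensorProduct.map_tmul, TensorProduct.rid_tmul, antipode_one', map_one]
  -- values on generators
  have Tea : T ea = q • ed := by
    rw [hT]; simp only [LinearMap.comp_apply]; rw [hΔa]
    simp [TensorProduct.map_tmul, TensorProduct.rid_tmul, hSa, hSb, hδa, hδc]
  have Teb : T eb = -eb := by
    rw [hT]; simp only [LinearMap.comp_apply]; rw [hΔb]
    simp [TensorProduct.map_tmul, TensorProduct.rid_tmul, hSa, hSb, hδb, hδd,
      smul_smul, inv_mul_cancel₀ hq]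
  have Tec : T ec = -ec := by
    rw [hT]; simp only [LinearMap.comp_apply]; rw [hΔc]
    simp [TensorProduct.map_tmul, TensorProduct.rid_tmul, hSc, hSd, hδa, hδc,
      smul_smul, mul_inv_cancel₀ hq]
  have Ted : T ed = q⁻¹ • ea := by
    rw [hT]; simp only [LinearMap.comp_apply]; rw [hΔd]
    simp [TensorProduct.map_tmul, TensorProduct.rid_tmul, hSc, hSd, hδb, hδd]
  -- the induction
  intro h
  have hmem : h ∈ Algebra.adjoin k ({ea, eb, ec, ed} : Set H) := by rw [hgen]; trivial
  refine Algebra.adjoin_induction (p := fun x _ => T (T x) = x) ?_ ?_ ?_ ?_ hmem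
  · intro x hx
    simp only [Set.mem_insert_iff, Set.mem_singleton_iff] at hx
    rcases hx with rfl | rfl | rfl | rfl
    · rw [Tea, map_smul, Ted, smul_smul, mul_inv_cancel₀ hq, one_smul]
    · rw [Teb, map_neg, Teb, neg_neg]
    · rw [Tec, map_neg, Tec, neg_neg]
    · rw [Ted, map_smul, Tea, smul_smul, inv_mul_cancel₀ hq, one_smul]
  · intro r
    rw [Algebra.algebraMap_eq_smul_one, map_smul, T1, map_smul, T1]
  · intro x y _ _ hx hy
    rw [map_add, map_add, hx, hy]
  · intro x y _ _ hx hy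
    rw [Tmul, Tmul, hx, hy]
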